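/- Let q, d, ℓ be positive integers with q ≥ d. Then an OR relation of arity (d−1)·ℓ is definable from NUR(d,ℓ,q). Concretely, with α_{i,j} = i for all (i,j) ∈ [d]×[ℓ], J = ([d]\{1}) × [ℓ], and β_{i,j} = 1 for all (i,j) ∈ J: every matrix M with M_{1,j} = 1 for all j, M_{i,j} ∈ {i, 1} for all (i,j) ∈ J, and M ≠ α, belongs to NUR(d,ℓ,q), while α is uniformly rainbow. -/
import Mathlib


/-- A `d × l` matrix over `Fin q` is uniformly rainbow if each column has pairwise
distinct entries and all columns have the same set of entries. -/
def UniformlyRainbow {d l q : ℕ} (M : Fin d → Fin l → Fin q) : Prop :=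
  (∀ j, Function.Injective fun i => M i j) ∧
  ∀ j j' : Fin l, (Finset.univ.image fun i => M i j) = Finset.univ.image fun i => M i j'

/-- For `q ≥ d`, an OR relation of arity `(d−1)·l` is definable from `NUR(d,l,q)`,
witnessed by `α i j = i`, `J = ([d]\{1}) × [l]`, `β = 1` on `J` (0-indexed: `0`). -/
theorem stmt2 (d l q : ℕ) (hd : 0 < d) (hl : 0 < l) (hq : d ≤ q) :
    let α : Fin d → Fin l → Fin q := fun i _ => Fin.castLE hq i
    UniformlyRainbow α ∧
    ∀ M : Fin d → Fin l → Fin q,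
      (∀ j, M ⟨0, hd⟩ j = α ⟨0, hd⟩ j) →
      (∀ (i : Fin d) (j : Fin l), (i : ℕ) ≠ 0 → M i j = α i j ∨ M i j = (⟨0, by omega⟩ : Fin q)) →
      M ≠ α → ¬ UniformlyRainbow M := by
  intro α
  constructor
  · refine ⟨fun j x y h => ?_, fun j j' => rfl⟩
    simpa [α, Fin.castLE_injective hq |>.eq_iff] using h
  · intro M h0 hij hne hUR
    -- find an entry where M differs from α
    have : ∃ i j, M i j ≠ α i j := by
      by_contra h
      push_neg at h
      exact hne (funext fun i => funext fun j => h i j)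
    obtain ⟨i, j, hdiff⟩ := this
    have hi0 : (i : ℕ) ≠ 0 := by
      intro h
      have : i = ⟨0, hd⟩ := Fin.ext h
      exact hdiff (this ▸ h0 j)
    have hM0 : M i j = ⟨0, by omega⟩ := (hij i j hi0).resolve_left hdiff
    have hM0' : M ⟨0, hd⟩ j = ⟨0, by omega⟩ := by
      rw [h0 j]; rfl
    have := hUR.1 j (show M i j = M ⟨0, hd⟩ j by rw [hM0, hM0'])
    exact hi0 (by rw [this])
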